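/- arXiv:2412.09904 — 5 statements merged into one kernel-verified Lean document; each statement's English description precedes it below -/
import Mathlib

section
/- Let n be a positive multiple of 4, and let a ∈ F_2^n with wt(a) = r, 1 ≤ r ≤ n-1. If r is odd then Σ_{x ∈ F_2^n, wt(x)=n/2} (-1)^{x·a} = 0; if r = 2j then Σ_{x ∈ F_2^n, wt(x)=n/2} (-1)^{x·a} = (-1)^j C(n, n/2) C(n/2, j) / C(n, 2j). -/
open Polynomial Finset

/-- Hamming weight of a binary vector. -/
def hw {n : ℕ} (x : Fin n → ZMod 2) : ℕ :=
  (Finset.univ.filter (fun i => x i ≠ 0)).card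

lemma chi_add : ∀ u v : ZMod 2, (-1:ℤ)^((u+v).val) = (-1)^u.val * (-1)^v.val := by decide

lemma chi_sum {ι : Type*} (s : Finset ι) (f : ι → ZMod 2) :
    (-1:ℤ)^((∑ i ∈ s, f i).val) = ∏ i ∈ s, (-1:ℤ)^((f i).val) := by
  classical
  induction s using Finset.induction_on with
  | empty => simp
  | insert a s h ih => rw [Finset.sum_insert h, Finset.prod_insert h, chi_add, ih]

lemma genfun (n k : ℕ) (a : Fin n → ZMod 2) :
    ∑ x ∈ Finset.univ.filter (fun x : Fin n → ZMod 2 => hw x = k),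
        (-1:ℤ)^((∑ i, x i * a i).val)
      = ((1 - X)^(hw a) * (1 + X)^(n - hw a) : Polynomial ℤ).coeff k := by
  classical
  have h1 : ∀ i : Fin n, ((1:Polynomial ℤ) + C ((-1:ℤ)^((a i).val)) * X)
      = ∑ t : ZMod 2, C ((-1:ℤ)^((t * a i).val)) * X ^ (if t ≠ 0 then 1 else 0) := by
    intro i
    have : (Finset.univ : Finset (ZMod 2)) = {0, 1} := by decide
    rw [this, Finset.sum_pair (by decide : (0 : ZMod 2) ≠ 1)]
    simp
  have key : (∑ x : Fin n → ZMod 2, C ((-1:ℤ)^((∑ i, x i * a i).val)) * X ^ (hw x))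
      = (1 - X)^(hw a) * (1 + X)^(n - hw a) := by
    have expand : ∏ i : Fin n, ((1:Polynomial ℤ) + C ((-1:ℤ)^((a i).val)) * X)
        = ∑ x : Fin n → ZMod 2, C ((-1:ℤ)^((∑ i, x i * a i).val)) * X ^ (hw x) := by
      calc ∏ i : Fin n, ((1:Polynomial ℤ) + C ((-1:ℤ)^((a i).val)) * X)
          = ∏ i : Fin n, ∑ t : ZMod 2, C ((-1:ℤ)^((t * a i).val)) * X ^ (if t ≠ 0 then 1 else 0) :=
            Finset.prod_congr rfl (fun i _ => h1 i)
        _ = ∑ x ∈ Fintype.piFinset (fun _ : Fin n => (Finset.univ : Finset (ZMod 2))),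
              ∏ i : Fin n, C ((-1:ℤ)^((x i * a i).val)) * X ^ (if x i ≠ 0 then 1 else 0) :=
            Finset.prod_univ_sum _ _
        _ = ∑ x : Fin n → ZMod 2, C ((-1:ℤ)^((∑ i, x i * a i).val)) * X ^ (hw x) := by
            rw [Fintype.piFinset_univ]
            refine Finset.sum_congr rfl (fun x _ => ?_)
            rw [Finset.prod_mul_distrib, ← map_prod, ← chi_sum, Finset.prod_pow_eq_pow_sum]
            congr 1
            unfold hw
            rw [Finset.card_filter]
    have split : ∏ i : Fin n, ((1:Polynomial ℤ) + C ((-1:ℤ)^((a i).val)) * X)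
        = (1 - X)^(hw a) * (1 + X)^(n - hw a) := by
      have e0 : ∀ u : ZMod 2, u ≠ 0 → (-1:ℤ)^u.val = -1 := by decide
      have e1 : ∀ u : ZMod 2, ¬ u ≠ 0 → (-1:ℤ)^u.val = 1 := by decide
      rw [← Finset.prod_filter_mul_prod_filter_not Finset.univ (fun i => a i ≠ 0)]
      have c1 : (Finset.univ.filter (fun i => a i ≠ 0)).card = hw a := rfl
      have c2 : (Finset.univ.filter (fun i => ¬ a i ≠ 0)).card = n - hw a := by
        have := Finset.card_filter_add_card_filter_not
          (s := (Finset.univ : Finset (Fin n))) (p := fun i => a i ≠ 0)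
        simp only [Finset.card_univ, Fintype.card_fin] at this
        omega
      congr 1
      · rw [Finset.prod_congr rfl (fun i hi => ?_), Finset.prod_const, c1]
        rw [e0 _ (Finset.mem_filter.mp hi).2]
        simp only [map_neg, map_one]
        ring
      · rw [Finset.prod_congr rfl (fun i hi => ?_), Finset.prod_const, c2]
        rw [e1 _ (Finset.mem_filter.mp hi).2]
        simp only [map_one]
        ring
    rw [← expand, split]
  have := congrArg (fun p => Polynomial.coeff p k) key
  simp only [Polynomial.finset_sum_coeff, Polynomial.coeff_C_mul, Polynomial.coeff_X_pow] at this
  rw [← this, Finset.sum_filter]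
  refine Finset.sum_congr rfl (fun x _ => ?_)
  by_cases h : hw x = k
  · simp [h]
  · rw [if_neg (Ne.symm h), mul_zero, if_neg h]

lemma card_weight (n k : ℕ) :
    (Finset.univ.filter (fun x : Fin n → ZMod 2 => hw x = k)).card = n.choose k := by
  classical
  have key : (Finset.univ.filter (fun x : Fin n → ZMod 2 => hw x = k)).card
      = (Finset.powersetCard k (Finset.univ : Finset (Fin n))).card := by
    apply Finset.card_bij (fun x _ => Finset.univ.filter (fun i => x i ≠ 0))
    · intro x hx
      rw [Finset.mem_powersetCard]
      exact ⟨Finset.subset_univ _, (Finset.mem_filter.mp hx).2⟩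
    · intro x hx y hy h
      have hne : ∀ u v : ZMod 2, ((u ≠ 0) = (v ≠ 0)) → u = v := by decide
      funext i
      apply hne
      have : (i ∈ Finset.univ.filter (fun i => x i ≠ 0))
          = (i ∈ Finset.univ.filter (fun i => y i ≠ 0)) := by rw [h]
      simpa using this
    · intro s hs
      rw [Finset.mem_powersetCard] at hs
      refine ⟨fun i => if i ∈ s then 1 else 0, ?_, ?_⟩
      · rw [Finset.mem_filter]
        refine ⟨Finset.mem_univ _, ?_⟩
        unfold hw
        rw [show (Finset.univ.filter (fun i => (if i ∈ s then (1:ZMod 2) else 0) ≠ 0)) = s from ?_]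
        · exact hs.2
        · ext i
          by_cases h : i ∈ s <;> simp [h]
      · ext i
        by_cases h : i ∈ s <;> simp [h]
  rw [key, Finset.card_powersetCard, Finset.card_univ, Fintype.card_fin]


lemma coeff_one_sub_X_sq (m k : ℕ) :
    ((1 - X^2 : Polynomial ℤ)^m).coeff k
      = if 2 ∣ k then (-1:ℤ)^(k/2) * (m.choose (k/2)) else 0 := by
  classical
  have expand : (1 - X^2 : Polynomial ℤ)^m
      = ∑ i ∈ Finset.range (m+1), C ((-1:ℤ)^i * (m.choose i : ℤ)) * X^(2*i) := by
    rw [sub_eq_add_neg, add_comm, add_pow]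
    refine Finset.sum_congr rfl (fun i _ => ?_)
    rw [neg_pow, one_pow, ← pow_mul]
    simp only [map_mul, map_pow, map_neg, map_one, map_natCast]
    ring
  rw [expand, Polynomial.finset_sum_coeff]
  simp only [Polynomial.coeff_C_mul, Polynomial.coeff_X_pow]
  by_cases h2 : 2 ∣ k
  · obtain ⟨j, rfl⟩ := h2
    rw [if_pos ⟨j, rfl⟩, Nat.mul_div_cancel_left _ (by norm_num)]
    rcases le_or_gt j m with hjm | hjm
    · rw [Finset.sum_eq_single_of_mem j (Finset.mem_range.mpr (by omega))]
      · rw [if_pos rfl, mul_one]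
      · intro i _ hij
        rw [if_neg (by omega), mul_zero]
    · rw [Finset.sum_eq_zero, Nat.choose_eq_zero_of_lt hjm]
      · simp
      · intro i hi
        rw [Finset.mem_range] at hi
        rw [if_neg (by omega), mul_zero]
  · rw [if_neg h2, Finset.sum_eq_zero]
    intro i _
    rw [if_neg (fun h => h2 ⟨i, h⟩), mul_zero]

lemma double_count (n m r : ℕ) (hnm : n = m + m) :
    (n.choose r : ℤ) * (((1 - X)^r * (1 + X)^(n - r) : Polynomial ℤ).coeff m)
      = (n.choose m : ℤ) * (((1 - X^2 : Polynomial ℤ)^m).coeff r) := by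
  classical
  have hnm2 : n - m = m := by omega
  have hswap :
      ∑ b ∈ Finset.univ.filter (fun b : Fin n → ZMod 2 => hw b = r),
        ∑ x ∈ Finset.univ.filter (fun x : Fin n → ZMod 2 => hw x = m),
          (-1:ℤ)^((∑ i, x i * b i).val)
      = ∑ x ∈ Finset.univ.filter (fun x : Fin n → ZMod 2 => hw x = m),
        ∑ b ∈ Finset.univ.filter (fun b : Fin n → ZMod 2 => hw b = r),
          (-1:ℤ)^((∑ i, b i * x i).val) := by
    rw [Finset.sum_comm]
    refine Finset.sum_congr rfl (fun x _ => Finset.sum_congr rfl (fun b _ => ?_))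
    congr 1
    exact congrArg _ (Finset.sum_congr rfl (fun i _ => mul_comm _ _))
  have h1 :
      ∑ b ∈ Finset.univ.filter (fun b : Fin n → ZMod 2 => hw b = r),
        ∑ x ∈ Finset.univ.filter (fun x : Fin n → ZMod 2 => hw x = m),
          (-1:ℤ)^((∑ i, x i * b i).val)
      = (n.choose r : ℤ) * (((1 - X)^r * (1 + X)^(n - r) : Polynomial ℤ).coeff m) := by
    have step : ∀ b ∈ Finset.univ.filter (fun b : Fin n → ZMod 2 => hw b = r),
        ∑ x ∈ Finset.univ.filter (fun x : Fin n → ZMod 2 => hw x = m),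
          (-1:ℤ)^((∑ i, x i * b i).val)
        = ((1 - X)^r * (1 + X)^(n - r) : Polynomial ℤ).coeff m := by
      intro b hb
      have hwb : hw b = r := (Finset.mem_filter.mp hb).2
      rw [genfun n m b, hwb]
    rw [Finset.sum_congr rfl step, Finset.sum_const, card_weight, nsmul_eq_mul]
  have h2 :
      ∑ x ∈ Finset.univ.filter (fun x : Fin n → ZMod 2 => hw x = m),
        ∑ b ∈ Finset.univ.filter (fun b : Fin n → ZMod 2 => hw b = r),
          (-1:ℤ)^((∑ i, b i * x i).val)
      = (n.choose m : ℤ) * (((1 - X^2 : Polynomial ℤ)^m).coeff r) := by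
    have step : ∀ x ∈ Finset.univ.filter (fun x : Fin n → ZMod 2 => hw x = m),
        ∑ b ∈ Finset.univ.filter (fun b : Fin n → ZMod 2 => hw b = r),
          (-1:ℤ)^((∑ i, b i * x i).val)
        = ((1 - X^2 : Polynomial ℤ)^m).coeff r := by
      intro x hx
      have hwx : hw x = m := (Finset.mem_filter.mp hx).2
      rw [genfun n r x, hwx]
      congr 2
      rw [hnm2, ← mul_pow]
      congr 1
      ring
    rw [Finset.sum_congr rfl step, Finset.sum_const, card_weight, nsmul_eq_mul]
  rw [← h1, hswap, h2]

/-- Eigenvalues of the Hadamard graph `H_n` (`4 | n`): for `a` of weight `r`,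
`1 ≤ r ≤ n-1`, the character sum over weight-`n/2` vectors vanishes for odd `r`
and equals `(-1)^j C(n,n/2) C(n/2,j) / C(n,2j)` for `r = 2j`. -/
theorem hadamard_graph_eigenvalue (n : ℕ) (hn4 : 4 ∣ n) (hn : 0 < n)
    (a : Fin n → ZMod 2) (r : ℕ) (ha : hw a = r) (hr1 : 1 ≤ r) (hrn : r ≤ n - 1) :
    (Odd r →
      ∑ x ∈ Finset.univ.filter (fun x : Fin n → ZMod 2 => hw x = n / 2),
          (-1 : ℤ) ^ (∑ i, x i * a i).val = 0) ∧
    (∀ j : ℕ, r = 2 * j →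
      ((∑ x ∈ Finset.univ.filter (fun x : Fin n → ZMod 2 => hw x = n / 2),
          (-1 : ℤ) ^ (∑ i, x i * a i).val : ℤ) : ℚ)
        = (-1 : ℚ) ^ j * (n.choose (n / 2)) * ((n / 2).choose j) / (n.choose (2 * j))) := by
  classical
  obtain ⟨q, hq⟩ := hn4
  have hnm : n = n / 2 + n / 2 := by omega
  have hrn' : r ≤ n := by omega
  have hS : (∑ x ∈ Finset.univ.filter (fun x : Fin n → ZMod 2 => hw x = n / 2),
        (-1 : ℤ) ^ (∑ i, x i * a i).val)
      = ((1 - X)^r * (1 + X)^(n - r) : Polynomial ℤ).coeff (n / 2) := by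
    rw [← ha]
    exact genfun n (n / 2) a
  have hdc := double_count n (n / 2) r hnm
  constructor
  · intro hodd
    have h2r : ¬ 2 ∣ r := by
      intro hd
      obtain ⟨t, rfl⟩ := hd
      have hmod := Nat.odd_iff.mp hodd
      rw [Nat.mul_mod_right] at hmod
      exact absurd hmod (by norm_num)
    rw [coeff_one_sub_X_sq, if_neg h2r, mul_zero] at hdc
    have hcr : (n.choose r : ℤ) ≠ 0 := by
      exact_mod_cast (Nat.choose_pos hrn').ne'
    rw [hS]
    rcases mul_eq_zero.mp hdc with h | h
    · exact absurd h hcr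
    · exact h
  · intro j hj
    subst hj
    rw [coeff_one_sub_X_sq, if_pos ⟨j, rfl⟩,
      Nat.mul_div_cancel_left _ (by norm_num : 0 < 2)] at hdc
    have hne : ((n.choose (2 * j) : ℚ)) ≠ 0 := by
      exact_mod_cast (Nat.choose_pos hrn').ne'
    rw [hS, eq_div_iff hne]
    have hq2 := congrArg (fun z : ℤ => (z : ℚ)) hdc
    push_cast at hq2 ⊢
    linear_combination hq2
end

section
/- Let n = 4t with t ≥ 1. The minimum eigenvalue of the Hadamard graph H_n (Cayley graph on F_2^n with connection set the weight-n/2 vectors) equals -C(n, n/2)/(n-1). Equivalently, for all a ∈ F_2^n, Σ_{x: wt(x)=n/2} (-1)^{x·a} ≥ -C(n,n/2)/(n-1), with equality attained for some a. -/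
open Finset

def Kr (k l s : ℕ) : ℤ :=
  ∑ i ∈ Finset.range (s+1), (-1:ℤ)^i * (k.choose i) * (l.choose (s-i))

lemma Kr_left (k l s : ℕ) : Kr (k+1) l (s+1) = Kr k l (s+1) - Kr k l s := by
  unfold Kr
  rw [Finset.sum_range_succ' (fun i => (-1:ℤ)^i * ((k+1).choose i) * (l.choose (s+1-i))) (s+1),
      Finset.sum_range_succ' (fun i => (-1:ℤ)^i * (k.choose i) * (l.choose (s+1-i))) (s+1)]
  have h : ∀ i ∈ Finset.range (s+1),
      (-1:ℤ)^(i+1) * ((k+1).choose (i+1)) * (l.choose (s+1-(i+1)))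
      = (-1:ℤ)^(i+1) * (k.choose (i+1)) * (l.choose (s+1-(i+1)))
        - (-1:ℤ)^i * (k.choose i) * (l.choose (s-i)) := by
    intro i _
    have : s + 1 - (i+1) = s - i := by omega
    rw [this, Nat.choose_succ_succ]
    push_cast
    ring
  rw [Finset.sum_congr rfl h, Finset.sum_sub_distrib]
  simp
  ring

lemma Kr_right (k l s : ℕ) : Kr k (l+1) (s+1) = Kr k l (s+1) + Kr k l s := by
  unfold Kr
  rw [Finset.sum_range_succ (fun i => (-1:ℤ)^i * (k.choose i) * ((l+1).choose (s+1-i))) (s+1),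
      Finset.sum_range_succ (fun i => (-1:ℤ)^i * (k.choose i) * (l.choose (s+1-i))) (s+1)]
  have h : ∀ i ∈ Finset.range (s+1),
      (-1:ℤ)^i * (k.choose i) * ((l+1).choose (s+1-i))
      = (-1:ℤ)^i * (k.choose i) * (l.choose (s+1-i))
        + (-1:ℤ)^i * (k.choose i) * (l.choose (s-i)) := by
    intro i hi
    simp only [Finset.mem_range] at hi
    have h1 : s + 1 - i = (s - i) + 1 := by omega
    rw [h1, Nat.choose_succ_succ]
    push_cast
    ring
  rw [Finset.sum_congr rfl h, Finset.sum_add_distrib]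
  simp
  ring

lemma Kr_key (k l s : ℕ) : Kr (k+2) l (s+2) = Kr k (l+2) (s+2) - 4 * Kr k l (s+1) := by
  have a1 := Kr_left (k+1) l (s+1)
  have a2 := Kr_left k l (s+1)
  have a3 := Kr_left k l s
  have b1 := Kr_right k (l+1) (s+1)
  have b2 := Kr_right k l (s+1)
  have b3 := Kr_right k l s
  -- Kr (k+2) l (s+2) = Kr k l (s+2) - 2 Kr k l (s+1) + Kr k l s
  -- Kr k (l+2) (s+2) = Kr k l (s+2) + 2 Kr k l (s+1) + Kr k l s
  linarith

lemma Kr_closed (j : ℕ) : ∀ m, j ≤ m → (Kr (2*j) (2*(m-j)) m : ℚ)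
    = (-1:ℚ)^j * (2*j).factorial * (2*(m-j)).factorial
      / ((j.factorial : ℚ) * (m-j).factorial * m.factorial) := by
  induction j with
  | zero =>
    intro m _
    have h0 : Kr 0 (2*m) m = ((2*m).choose m : ℤ) := by
      unfold Kr
      rw [Finset.sum_range_succ' (fun i => (-1:ℤ)^i * ((0:ℕ).choose i) * ((2*m).choose (m-i))) m]
      simp
    simp only [Nat.mul_zero, Nat.sub_zero, h0]
    rw [Int.cast_natCast, Nat.cast_choose ℚ (by omega : m ≤ 2*m)]
    have : 2*m - m = m := by omega
    rw [this]
    simp [Nat.factorial]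
  | succ j ih =>
    intro m hm
    obtain ⟨u, rfl⟩ : ∃ u, m = j + u + 1 := ⟨m - j - 1, by omega⟩
    have e1 : 2*(j+1) = 2*j+2 := by ring
    have e2 : (j + u + 1) - (j+1) = u := by omega
    have e3 : (j + u + 1) - j = u + 1 := by omega
    rw [e1, e2]
    have key : (Kr (2*j+2) (2*u) (j+u+1) : ℚ)
        = (Kr (2*j) (2*u+2) (j+u+1) : ℚ) - 4 * (Kr (2*j) (2*u) (j+u) : ℚ) := by
      rcases Nat.eq_zero_or_pos (j+u) with h | h
      · obtain ⟨rfl, rfl⟩ : j = 0 ∧ u = 0 := by omega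
        norm_num [Kr, Finset.sum_range_succ]
      · obtain ⟨s, hs⟩ : ∃ s, j + u + 1 = s + 2 := ⟨j + u - 1, by omega⟩
        rw [hs, show j + u = s + 1 by omega]
        exact_mod_cast congrArg (Int.cast : ℤ → ℚ) (Kr_key (2*j) (2*u) s)
    have ih1 : (Kr (2*j) (2*u+2) (j+u+1) : ℚ)
        = (-1:ℚ)^j * (2*j).factorial * (2*(u+1)).factorial
          / ((j.factorial : ℚ) * (u+1).factorial * (j+u+1).factorial) := by
      have := ih (j+u+1) (by omega)
      rw [e3] at this
      rw [show 2*u+2 = 2*(u+1) by ring]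
      exact this
    have ih2 : (Kr (2*j) (2*u) (j+u) : ℚ)
        = (-1:ℚ)^j * (2*j).factorial * (2*u).factorial
          / ((j.factorial : ℚ) * u.factorial * (j+u).factorial) := by
      have := ih (j+u) (by omega)
      rw [show j + u - j = u by omega] at this
      exact this
    rw [key, ih1, ih2]
    have f1 : ((2*j+2).factorial : ℚ) = (2*j+2)*(2*j+1)*(2*j).factorial := by
      rw [show 2*j+2 = (2*j+1)+1 from rfl, Nat.factorial_succ, Nat.factorial_succ]
      push_cast; ring
    have f2 : ((2*(u+1)).factorial : ℚ) = (2*u+2)*(2*u+1)*(2*u).factorial := by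
      rw [show 2*(u+1) = (2*u+1)+1 by ring, Nat.factorial_succ, Nat.factorial_succ]
      push_cast; ring
    have f3 : ((j+1).factorial : ℚ) = (j+1)*j.factorial := by
      rw [Nat.factorial_succ]; push_cast; ring
    have f4 : ((u+1).factorial : ℚ) = (u+1)*u.factorial := by
      rw [Nat.factorial_succ]; push_cast; ring
    have f5 : ((j+u+1).factorial : ℚ) = (j+u+1)*(j+u).factorial := by
      rw [Nat.factorial_succ]; push_cast; ring
    rw [f1, f2, f4, f5, f3]
    have nz1 : (j.factorial : ℚ) ≠ 0 := Nat.cast_ne_zero.mpr (Nat.factorial_ne_zero j)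
    have nz2 : (u.factorial : ℚ) ≠ 0 := Nat.cast_ne_zero.mpr (Nat.factorial_ne_zero u)
    have nz3 : ((j+u).factorial : ℚ) ≠ 0 := Nat.cast_ne_zero.mpr (Nat.factorial_ne_zero _)
    have nz4 : ((j:ℚ)+1) ≠ 0 := by positivity
    have nz5 : ((u:ℚ)+1) ≠ 0 := by positivity
    have nz6 : ((j:ℚ)+u+1) ≠ 0 := by positivity
    field_simp
    ring

noncomputable def Nq (m j : ℕ) : ℚ :=
  ((2*j).factorial : ℚ) * (2*(m-j)).factorial / ((j.factorial : ℚ) * (m-j).factorial * m.factorial)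

lemma Nq_pos (m j : ℕ) : 0 < Nq m j := by
  unfold Nq
  have a := Nat.factorial_pos (2*j)
  have b := Nat.factorial_pos (2*(m-j))
  have c := Nat.factorial_pos j
  have d := Nat.factorial_pos (m-j)
  have e := Nat.factorial_pos m
  positivity

lemma Nq_symm (m j : ℕ) (h : j ≤ m) : Nq m (m-j) = Nq m j := by
  unfold Nq
  rw [show m - (m-j) = j by omega]
  ring

lemma Nq_mono (j u : ℕ) (h : j ≤ u) : Nq (j+u+1) (j+1) ≤ Nq (j+u+1) j := by
  have e1 : j + u + 1 - (j+1) = u := by omega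
  have e2 : j + u + 1 - j = u + 1 := by omega
  unfold Nq
  rw [e1, e2]
  have f1 : ((2*(j+1)).factorial : ℚ) = (2*j+2)*(2*j+1)*(2*j).factorial := by
    rw [show 2*(j+1) = (2*j+1)+1 by ring, Nat.factorial_succ, Nat.factorial_succ]
    push_cast; ring
  have f2 : ((2*(u+1)).factorial : ℚ) = (2*u+2)*(2*u+1)*(2*u).factorial := by
    rw [show 2*(u+1) = (2*u+1)+1 by ring, Nat.factorial_succ, Nat.factorial_succ]
    push_cast; ring
  have f3 : ((j+1).factorial : ℚ) = (j+1)*j.factorial := by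
    rw [Nat.factorial_succ]; push_cast; ring
  have f4 : ((u+1).factorial : ℚ) = (u+1)*u.factorial := by
    rw [Nat.factorial_succ]; push_cast; ring
  rw [f1, f2, f3, f4]
  have p1 : (0:ℚ) < (2*j).factorial := by exact_mod_cast Nat.factorial_pos _
  have p2 : (0:ℚ) < (2*u).factorial := by exact_mod_cast Nat.factorial_pos _
  have p3 : (0:ℚ) < j.factorial := by exact_mod_cast Nat.factorial_pos _
  have p4 : (0:ℚ) < u.factorial := by exact_mod_cast Nat.factorial_pos _
  have p5 : (0:ℚ) < (j+u+1).factorial := by exact_mod_cast Nat.factorial_pos _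
  have hju : (j:ℚ) ≤ u := by exact_mod_cast h
  rw [div_le_div_iff₀ (by positivity) (by positivity)]
  have key : ((2*(j:ℚ)+2)*(2*(j:ℚ)+1)*((u:ℚ)+1)) ≤ (2*(u:ℚ)+2)*(2*(u:ℚ)+1)*((j:ℚ)+1) := by
    nlinarith [mul_nonneg (mul_nonneg (by positivity : (0:ℚ) ≤ (j:ℚ)+1)
      (by positivity : (0:ℚ) ≤ (u:ℚ)+1)) (by linarith : (0:ℚ) ≤ (u:ℚ)-(j:ℚ))]
  have Cpos : (0:ℚ) < ((2*j).factorial : ℚ) * ((2*u).factorial : ℚ) * (j.factorial : ℚ)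
      * (u.factorial : ℚ) * ((j+u+1).factorial : ℚ) := by positivity
  calc (2*(j:ℚ)+2)*(2*(j:ℚ)+1)*((2*j).factorial : ℚ) * ((2*u).factorial : ℚ) *
        ((j.factorial : ℚ) * (((u:ℚ)+1) * (u.factorial:ℚ)) * ((j+u+1).factorial : ℚ))
      = ((2*(j:ℚ)+2)*(2*(j:ℚ)+1)*((u:ℚ)+1)) * (((2*j).factorial : ℚ) * ((2*u).factorial : ℚ)
        * (j.factorial : ℚ) * (u.factorial : ℚ) * ((j+u+1).factorial : ℚ)) := by ring
    _ ≤ ((2*(u:ℚ)+2)*(2*(u:ℚ)+1)*((j:ℚ)+1)) * (((2*j).factorial : ℚ) * ((2*u).factorial : ℚ)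
        * (j.factorial : ℚ) * (u.factorial : ℚ) * ((j+u+1).factorial : ℚ)) :=
        mul_le_mul_of_nonneg_right key (le_of_lt Cpos)
    _ = ((2*j).factorial : ℚ) * ((2*(u:ℚ)+2)*(2*(u:ℚ)+1)*((2*u).factorial:ℚ)) *
        (((j:ℚ)+1) * (j.factorial:ℚ) * (u.factorial:ℚ) * ((j+u+1).factorial : ℚ)) := by ring

lemma Nq_chain (t : ℕ) (ht : 1 ≤ t) : ∀ j, 1 ≤ j → j ≤ t → Nq (2*t) j ≤ Nq (2*t) 1 := by
  intro j
  induction j with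
  | zero => omega
  | succ j ih =>
    intro _ hj
    rcases Nat.eq_zero_or_pos j with rfl | hj1
    · exact le_refl _
    · have h1 : Nq (2*t) (j+1) ≤ Nq (2*t) j := by
        have hu : j ≤ 2*t - j - 1 := by omega
        have := Nq_mono j (2*t - j - 1) hu
        rwa [show j + (2*t - j - 1) + 1 = 2*t by omega] at this
      exact le_trans h1 (ih hj1 (by omega))

lemma Nq_le_one (t : ℕ) (ht : 1 ≤ t) (j : ℕ) (h1 : 1 ≤ j) (h2 : j ≤ 2*t - 1) :
    Nq (2*t) j ≤ Nq (2*t) 1 := by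
  rcases le_or_gt j t with h | h
  · exact Nq_chain t ht j h1 h
  · have h3 : Nq (2*t) j = Nq (2*t) (2*t - j) := by
      rw [← Nq_symm (2*t) (2*t - j) (by omega), show 2*t - (2*t - j) = j by omega]
    rw [h3]
    exact Nq_chain t ht (2*t - j) (by omega) (by omega)

lemma Nq_one (v : ℕ) : Nq (v+1) 1 = ((2*(v+1)).choose (v+1) : ℚ) / (2*(v+1) - 1) := by
  unfold Nq
  rw [Nat.cast_choose ℚ (by omega : v+1 ≤ 2*(v+1)), show 2*(v+1) - (v+1) = v+1 by omega,
      show (v+1) - 1 = v by omega]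
  have f1 : ((2*(v+1)).factorial : ℚ) = (2*v+2)*(2*v+1)*(2*v).factorial := by
    rw [show 2*(v+1) = (2*v+1)+1 by ring, Nat.factorial_succ, Nat.factorial_succ]
    push_cast; ring
  have f3 : ((v+1).factorial : ℚ) = (v+1)*v.factorial := by
    rw [Nat.factorial_succ]; push_cast; ring
  rw [f1, f3]
  have p2 : (0:ℚ) < (2*v).factorial := by exact_mod_cast Nat.factorial_pos _
  have p4 : (0:ℚ) < v.factorial := by exact_mod_cast Nat.factorial_pos _
  have h1 : ((2:ℕ).factorial : ℚ) = 2 := by norm_num [Nat.factorial]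
  have h2 : ((1:ℕ).factorial : ℚ) = 1 := by norm_num [Nat.factorial]
  rw [show (2*1 : ℕ) = 2 from rfl, h1, h2]
  have : ((2:ℚ)*(v+1) - 1) = 2*v+1 := by push_cast; ring
  rw [this]
  field_simp

lemma card_inter_count {n : ℕ} (A : Finset (Fin n)) (m i : ℕ) (him : i ≤ m) :
    ((powersetCard m (univ : Finset (Fin n))).filter (fun T => (T ∩ A).card = i)).card
    = A.card.choose i * (n - A.card).choose (m - i) := by
  have : ((powersetCard m (univ : Finset (Fin n))).filter (fun T => (T ∩ A).card = i)).card
      = ((A.powersetCard i) ×ˢ (Aᶜ.powersetCard (m-i))).card := by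
    apply Finset.card_nbij' (fun T => (T ∩ A, T \ A)) (fun p => p.1 ∪ p.2)
    · intro T hT
      simp only [Finset.mem_coe, Finset.mem_filter, Finset.mem_powersetCard_univ] at hT
      obtain ⟨hcard, hint⟩ := hT
      simp only [Finset.mem_coe, Finset.mem_product, Finset.mem_powersetCard]
      refine ⟨⟨Finset.inter_subset_right, hint⟩, ?_, ?_⟩
      · intro x hx
        simp only [Finset.mem_sdiff] at hx
        simp [Finset.mem_compl, hx.2]
      · have h := Finset.card_inter_add_card_sdiff T A
        omega
    · intro p hp
      simp only [Finset.mem_coe, Finset.mem_product, Finset.mem_powersetCard] at hp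
      obtain ⟨⟨h1, h2⟩, h3, h4⟩ := hp
      have hdisj : Disjoint p.1 p.2 := by
        apply Finset.disjoint_left.mpr
        intro x hx1 hx2
        exact (Finset.mem_compl.mp (h3 hx2)) (h1 hx1)
      simp only [Finset.mem_coe, Finset.mem_filter, Finset.mem_powersetCard_univ]
      constructor
      · rw [Finset.card_union_of_disjoint hdisj, h2, h4]; omega
      · have : (p.1 ∪ p.2) ∩ A = p.1 := by
          ext x
          simp only [Finset.mem_inter, Finset.mem_union]
          constructor
          · rintro ⟨hx1 | hx2, hxA⟩
            · exact hx1
            · exact absurd hxA (Finset.mem_compl.mp (h3 hx2))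
          · intro hx; exact ⟨Or.inl hx, h1 hx⟩
        rw [this, h2]
    · intro T hT
      show T ∩ A ∪ T \ A = T
      rw [Finset.union_comm]
      exact Finset.sdiff_union_inter T A
    · intro p hp
      simp only [Finset.mem_coe, Finset.mem_product, Finset.mem_powersetCard] at hp
      obtain ⟨⟨h1, h2⟩, h3, h4⟩ := hp
      have e1 : (p.1 ∪ p.2) ∩ A = p.1 := by
        ext x
        simp only [Finset.mem_inter, Finset.mem_union]
        constructor
        · rintro ⟨hx1 | hx2, hxA⟩
          · exact hx1
          · exact absurd hxA (Finset.mem_compl.mp (h3 hx2))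
        · intro hx; exact ⟨Or.inl hx, h1 hx⟩
      have e2 : (p.1 ∪ p.2) \ A = p.2 := by
        ext x
        simp only [Finset.mem_sdiff, Finset.mem_union]
        constructor
        · rintro ⟨hx1 | hx2, hxA⟩
          · exact absurd (h1 hx1) hxA
          · exact hx2
        · intro hx; exact ⟨Or.inr hx, Finset.mem_compl.mp (h3 hx)⟩
      exact Prod.ext e1 e2
  rw [this, Finset.card_product, Finset.card_powersetCard, Finset.card_powersetCard,
      Finset.card_compl, Fintype.card_fin]

lemma zmod2_mul_ite (u v : ZMod 2) : u * v = if u ≠ 0 ∧ v ≠ 0 then 1 else 0 := by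
  fin_cases u <;> fin_cases v <;> decide

lemma zmod2_ne_zero (u : ZMod 2) (h : u ≠ 0) : u = 1 := by
  revert h; revert u; decide

lemma neg_one_val (c : ℕ) : (-1:ℤ)^((c : ZMod 2)).val = (-1:ℤ)^c := by
  rw [ZMod.val_natCast, ← neg_one_pow_eq_pow_mod_two]

lemma sum_eq_Kr {n : ℕ} (m : ℕ) (a : Fin n → ZMod 2) :
    ∑ x ∈ univ.filter (fun x : Fin n → ZMod 2 => hw x = m), (-1:ℤ)^(∑ i, x i * a i).val
    = Kr (hw a) (n - hw a) m := by
  set A : Finset (Fin n) := univ.filter (fun i => a i ≠ 0) with hA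
  have step1 : ∀ x : Fin n → ZMod 2,
      (-1:ℤ)^(∑ i, x i * a i).val = (-1:ℤ)^(((univ.filter (fun i => x i ≠ 0)) ∩ A).card) := by
    intro x
    have h1 : (∑ i, x i * a i)
        = (((univ.filter (fun i => x i ≠ 0 ∧ a i ≠ 0))).card : ZMod 2) := by
      rw [Finset.sum_congr rfl (fun i _ => zmod2_mul_ite (x i) (a i)), Finset.sum_boole]
    have h2 : univ.filter (fun i => x i ≠ 0 ∧ a i ≠ 0)
        = (univ.filter (fun i => x i ≠ 0)) ∩ A := by
      rw [hA, ← Finset.filter_and]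
    rw [h1, h2, neg_one_val]
  rw [Finset.sum_congr rfl (fun x _ => step1 x)]
  rw [Finset.sum_nbij' (fun x : Fin n → ZMod 2 => univ.filter (fun i => x i ≠ 0))
      (fun T : Finset (Fin n) => (fun i => if i ∈ T then (1 : ZMod 2) else 0))
      (s := univ.filter (fun x : Fin n → ZMod 2 => hw x = m))
      (t := powersetCard m (univ : Finset (Fin n)))
      (g := fun T => (-1:ℤ)^((T ∩ A).card))
      ?hi ?hj ?hji ?hij ?hfg]
  case hi =>
    intro x hx
    simp only [Finset.mem_filter] at hx
    exact Finset.mem_powersetCard_univ.mpr hx.2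
  case hj =>
    intro T hT
    simp only [Finset.mem_filter, Finset.mem_univ, true_and]
    have : univ.filter (fun i => (if i ∈ T then (1 : ZMod 2) else 0) ≠ 0) = T := by
      ext i
      by_cases h : i ∈ T <;> simp [h]
    rw [hw, this]
    exact Finset.mem_powersetCard_univ.mp hT
  case hji =>
    intro x _
    funext i
    by_cases h : x i = 0 <;> simp [h]
    exact (zmod2_ne_zero _ h).symm
  case hij =>
    intro T _
    ext i
    by_cases h : i ∈ T <;> simp [h]
  case hfg => intro x _; rfl
  rw [← Finset.sum_fiberwise_of_maps_to
      (g := fun T : Finset (Fin n) => (T ∩ A).card) (t := Finset.range (m+1))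
      (fun T hT => by
        simp only [Finset.mem_range]
        have h1 : (T ∩ A).card ≤ T.card := Finset.card_le_card Finset.inter_subset_left
        have h2 : T.card = m := Finset.mem_powersetCard_univ.mp hT
        omega)]
  rw [show hw a = A.card from rfl]
  unfold Kr
  apply Finset.sum_congr rfl
  intro i hi
  simp only [Finset.mem_range] at hi
  have : ∀ T ∈ (powersetCard m (univ : Finset (Fin n))).filter (fun T => (T ∩ A).card = i),
      (-1:ℤ)^((T ∩ A).card) = (-1:ℤ)^i := by
    intro T hT
    rw [(Finset.mem_filter.mp hT).2]
  rw [Finset.sum_congr rfl this, Finset.sum_const,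
      card_inter_count A m i (by omega), nsmul_eq_mul]
  push_cast
  ring

lemma zmod2_sum_eq_hw {n : ℕ} (a : Fin n → ZMod 2) : (∑ i, a i) = (hw a : ZMod 2) := by
  have h : ∀ u : ZMod 2, u = if u ≠ 0 then 1 else 0 := by decide
  rw [Finset.sum_congr rfl (fun i _ => h (a i)), Finset.sum_boole, hw]

lemma neg_one_pow_succ_val (u : ZMod 2) : (-1:ℤ)^((u+1).val) = -(-1:ℤ)^u.val := by
  fin_cases u <;> decide

lemma sum_odd {n m : ℕ} (hnm : n = 2*m) (hm : 0 < m) (a : Fin n → ZMod 2)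
    (hodd : Odd (hw a)) :
    ∑ x ∈ univ.filter (fun x : Fin n → ZMod 2 => hw x = m), (-1:ℤ)^(∑ i, x i * a i).val
      = 0 := by
  have hcast : (hw a : ZMod 2) = 1 := by
    obtain ⟨r, hr⟩ := hodd
    rw [hr]; push_cast
    rw [show ((2:ZMod 2)) = 0 from rfl]; ring
  have hwadd : ∀ x : Fin n → ZMod 2, hw (x + 1) = n - hw x := by
    intro x
    have h1 : (univ.filter (fun i => (x + 1) i ≠ 0)) = (univ.filter (fun i => x i ≠ 0))ᶜ := by
      ext i
      have : ∀ u : ZMod 2, u + 1 ≠ 0 ↔ ¬(u ≠ 0) := by decide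
      simp only [Finset.mem_filter, Finset.mem_univ, true_and, Finset.mem_compl, Pi.add_apply,
        Pi.one_apply]
      exact this (x i)
    rw [hw, h1, Finset.card_compl, Fintype.card_fin, hw]
  apply Finset.sum_involution (fun x _ => x + 1)
  · intro x hx
    have hdot : (∑ i, (x + 1) i * a i) = (∑ i, x i * a i) + 1 := by
      have : ∀ i, (x + 1) i * a i = x i * a i + a i := by
        intro i; simp [Pi.add_apply, add_mul]
      rw [Finset.sum_congr rfl (fun i _ => this i), Finset.sum_add_distrib,
        zmod2_sum_eq_hw a, hcast]
    rw [hdot, neg_one_pow_succ_val]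
    ring
  · intro x _ _
    intro h
    have := congrFun h ⟨0, by omega⟩
    simpa using this
  · intro x _
    funext i
    have : ((1:ZMod 2) + 1) = 0 := rfl
    simp [add_assoc, this]
  · intro x hx
    simp only [Finset.mem_filter, Finset.mem_univ, true_and] at hx ⊢
    rw [hwadd, hx]; omega

lemma Kr_eq_Nq (j m : ℕ) (h : j ≤ m) : (Kr (2*j) (2*(m-j)) m : ℚ) = (-1:ℚ)^j * Nq m j := by
  rw [Kr_closed j m h]; unfold Nq; ring

/-- The minimum eigenvalue of the Hadamard graph `H_n`, `n = 4t`, equals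
`-C(n,n/2)/(n-1)`: every eigenvalue is at least this value, and it is attained. -/
theorem hadamard_graph_min_eigenvalue (t : ℕ) (ht : 1 ≤ t) (n : ℕ) (hn : n = 4 * t) :
    (∀ a : Fin n → ZMod 2,
      ((∑ x ∈ Finset.univ.filter (fun x : Fin n → ZMod 2 => hw x = n / 2),
          (-1 : ℤ) ^ (∑ i, x i * a i).val : ℤ) : ℚ)
        ≥ -(n.choose (n / 2) : ℚ) / (n - 1)) ∧
    (∃ a : Fin n → ZMod 2,
      ((∑ x ∈ Finset.univ.filter (fun x : Fin n → ZMod 2 => hw x = n / 2),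
          (-1 : ℤ) ^ (∑ i, x i * a i).val : ℤ) : ℚ)
        = -(n.choose (n / 2) : ℚ) / (n - 1)) := by
  have hm : n / 2 = 2 * t := by omega
  have hn2 : n = 2 * (2 * t) := by omega
  have hrhs : -(n.choose (n / 2) : ℚ) / (n - 1) = -(Nq (2*t) 1) := by
    have h1 : n.choose (n/2) = (2*(2*t)).choose (2*t) := by rw [hm, ← hn2]
    have h2 : ((n:ℚ)) = ((2*(2*t) : ℕ) : ℚ) := by exact_mod_cast congrArg (Nat.cast (R := ℚ)) hn2
    have hv : 2*t = (2*t - 1) + 1 := by omega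
    have hc : ((2*t - 1 : ℕ) : ℚ) = 2*(t:ℚ) - 1 := by
      rw [Nat.cast_sub (by omega : 1 ≤ 2*t)]; push_cast; ring
    rw [h1, h2, hv, Nq_one (2*t - 1)]
    push_cast [Nat.cast_sub (show 1 ≤ 2*t by omega)]
    ring
  constructor
  · intro a
    have hwa_le : hw a ≤ n := by
      have := Finset.card_filter_le (univ : Finset (Fin n)) (fun i => a i ≠ 0)
      simpa [hw] using this
    rcases Nat.even_or_odd (hw a) with heven | hodd
    · obtain ⟨j, hj⟩ := heven
      have hj2 : hw a = 2 * j := by omega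
      have hjm : j ≤ 2 * t := by omega
      have hsum : (∑ x ∈ Finset.univ.filter (fun x : Fin n → ZMod 2 => hw x = n / 2),
          (-1 : ℤ) ^ (∑ i, x i * a i).val) = Kr (2*j) (2*(2*t - j)) (2*t) := by
        rw [hm, sum_eq_Kr (2*t) a, hj2, show n - 2*j = 2*(2*t - j) by omega]
      rw [hsum, hrhs, Kr_eq_Nq j (2*t) hjm]
      rcases Nat.even_or_odd j with hje | hjo
      · rw [hje.neg_one_pow]
        have h1 := Nq_pos (2*t) j
        have h2 := Nq_pos (2*t) 1
        linarith
      · rw [hjo.neg_one_pow]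
        have hj1 : 1 ≤ j := hjo.pos
        have hjle : j ≤ 2*t - 1 := by
          clear hsum
          rcases Nat.lt_or_ge j (2*t) with h | h
          · omega
          · exfalso
            have hj' : j = 2*t := by omega
            rw [hj'] at hjo
            exact (Nat.not_odd_iff_even.mpr ⟨t, by ring⟩) hjo
        have := Nq_le_one t ht j hj1 hjle
        linarith
    · rw [hrhs, hm, sum_odd hn2 (by omega) a hodd]
      push_cast
      have := Nq_pos (2*t) 1
      linarith
  · refine ⟨fun i => if (i : ℕ) < 2 then 1 else 0, ?_⟩
    have hwa : hw (fun i : Fin n => if (i : ℕ) < 2 then (1 : ZMod 2) else 0) = 2 := by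
      have h0 : (0 : ℕ) < n := by omega
      have h1 : (1 : ℕ) < n := by omega
      have hfe : univ.filter (fun i : Fin n =>
          (if (i : ℕ) < 2 then (1 : ZMod 2) else 0) ≠ 0)
          = {(⟨0, h0⟩ : Fin n), ⟨1, h1⟩} := by
        ext i
        by_cases h : (i : ℕ) < 2
        · simp [h, Fin.ext_iff]
          omega
        · simp [h, Fin.ext_iff]
          omega
      rw [hw, hfe, Finset.card_pair (by simp [Fin.ext_iff])]
    have hsum : (∑ x ∈ Finset.univ.filter (fun x : Fin n → ZMod 2 => hw x = n / 2),
        (-1 : ℤ) ^ (∑ i, x i * (if (i : ℕ) < 2 then (1:ZMod 2) else 0)).val)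
        = Kr (2*1) (2*(2*t - 1)) (2*t) := by
      rw [hm, sum_eq_Kr (2*t) _, hwa, show n - 2 = 2*(2*t - 1) by omega]
    rw [hsum, hrhs, Kr_eq_Nq 1 (2*t) (by clear hsum; omega)]
    ring
end

section
/- For the binary Krawtchouk polynomial with n = 4t-1 and ℓ = 2t: if r = 2j with 0 ≤ j ≤ 2t-1 then K_{2t}^{4t-1}(2j) = (-1)^j C(4t-1, 2t) C(2t-1, j) / C(4t-1, 2j), and if r = 2j+1 with 0 ≤ j ≤ 2t-1 then K_{2t}^{4t-1}(2j+1) = (-1)^{j+1} C(4t-1, 2t) C(2t-1, j) / C(4t-1, 2j+1). -/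
open Polynomial Finset

/-- Binary Krawtchouk polynomial `K_ℓ^n(r) = ∑_{i=0}^ℓ (-1)^i C(r,i) C(n-r, ℓ-i)`. -/
def binKraw (n ℓ r : ℕ) : ℤ :=
  ∑ i ∈ Finset.range (ℓ + 1), (-1 : ℤ) ^ i * (r.choose i) * ((n - r).choose (ℓ - i))

lemma coeff_one_sub_X_pow (r k : ℕ) :
    ((1 - X : Polynomial ℤ) ^ r).coeff k = (-1) ^ k * r.choose k := by
  have h : (1 - X : Polynomial ℤ) = -1 * (X + C (-1)) := by
    simp [map_neg]; ring
  rw [h, mul_pow, ← C_1, ← C_neg, ← C_pow, coeff_C_mul, coeff_X_add_C_pow]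
  rcases le_or_gt k r with hk | hk
  · have key : ((-1 : ℤ)) ^ r * (-1) ^ (r - k) = (-1) ^ k := by
      rw [← pow_add, show r + (r - k) = 2 * (r - k) + k by omega, pow_add, pow_mul]
      norm_num
    linear_combination ((r.choose k : ℤ)) * key
  · simp [Nat.choose_eq_zero_of_lt hk]

lemma binKraw_eq_coeff (n ℓ r : ℕ) :
    binKraw n ℓ r = (((1 - X) ^ r * (1 + X) ^ (n - r) : Polynomial ℤ)).coeff ℓ := by
  rw [coeff_mul, Finset.Nat.sum_antidiagonal_eq_sum_range_succ_mk]
  unfold binKraw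
  refine Finset.sum_congr rfl fun i _ => ?_
  rw [coeff_one_sub_X_pow, coeff_one_add_X_pow]

lemma key_poly (n x : ℕ) (hx : 1 ≤ x) (hxn : x < n) :
    (1 - X ^ 2 : Polynomial ℤ) * derivative ((1 - X) ^ x * (1 + X) ^ (n - x)) =
      (C ((n : ℤ) - 2 * x) - C (n : ℤ) * X) * ((1 - X) ^ x * (1 + X) ^ (n - x)) := by
  obtain ⟨a, ha⟩ : ∃ a, x = a + 1 := ⟨x - 1, by omega⟩
  obtain ⟨b, hb⟩ : ∃ b, n - x = b + 1 := ⟨n - x - 1, by omega⟩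
  have hn : n = a + b + 2 := by omega
  subst ha
  rw [hb, hn]
  simp only [derivative_mul, derivative_pow, derivative_sub, derivative_add,
    derivative_one, derivative_X, zero_sub, zero_add, map_natCast, map_sub, map_mul,
    map_add, map_one, map_ofNat]
  push_cast
  ring

lemma kraw_rec (n x d : ℕ) (hx : 1 ≤ x) (hxn : x < n) (hd : 1 ≤ d) :
    ((d : ℤ) + 1) * binKraw n (d + 1) x =
      ((n : ℤ) - 2 * x) * binKraw n d x - ((n : ℤ) - d + 1) * binKraw n (d - 1) x := by
  obtain ⟨e, he⟩ : ∃ e, d = e + 1 := ⟨d - 1, by omega⟩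
  subst he
  have h := congrArg (fun p => p.coeff (e + 1)) (key_poly n x hx hxn)
  simp only [sub_mul, one_mul, coeff_sub, coeff_C_mul] at h
  set F : Polynomial ℤ := (1 - X) ^ x * (1 + X) ^ (n - x) with hF
  have hXX : (X ^ 2 * derivative F).coeff (e + 1)
      = (derivative F * X ^ 2).coeff (e + 1) := by rw [mul_comm]
  have hX : (C (n : ℤ) * X * F).coeff (e + 1) = (n : ℤ) * F.coeff e := by
    rw [mul_assoc, coeff_C_mul, coeff_X_mul]
  rw [hXX, coeff_mul_X_pow', hX, coeff_derivative] at h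
  have hb1 : binKraw n (e + 1 + 1) x = F.coeff (e + 2) := by
    rw [binKraw_eq_coeff, ← hF]
  have hb2 : binKraw n (e + 1) x = F.coeff (e + 1) := by
    rw [binKraw_eq_coeff, ← hF]
  have hb3 : binKraw n (e + 1 - 1) x = F.coeff e := by
    rw [show e + 1 - 1 = e from rfl, binKraw_eq_coeff, ← hF]
  rw [hb1, hb2, hb3]
  rcases Nat.lt_or_ge e 1 with he1 | he1
  · interval_cases e
    rw [if_neg (by omega)] at h
    norm_num at h ⊢
    linarith
  · rw [if_pos (by omega), show e + 1 - 2 = e - 1 by omega, coeff_derivative,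
      show e - 1 + 1 = e by omega] at h
    have hc : ((e - 1 : ℕ) : ℤ) + 1 = (e : ℤ) := by
      have h9 : ((e - 1 : ℕ) : ℤ) = (e : ℤ) - 1 := by push_cast [he1]; ring
      rw [h9]; ring
    rw [hc] at h
    push_cast at h ⊢
    linarith

lemma choose_sub_symm (m a b : ℕ) :
    m.choose a * (m - a).choose b = m.choose b * (m - b).choose a := by
  rcases le_or_gt (a + b) m with h | h
  · have h1 := Nat.choose_mul (n := m) (k := a + b) (s := a) (Nat.le_add_right a b)
    have h2 := Nat.choose_mul (n := m) (k := a + b) (s := b) (Nat.le_add_left b a)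
    rw [show a + b - a = b by omega] at h1
    rw [show a + b - b = a by omega] at h2
    rw [Nat.choose_symm_add] at h1
    omega
  · rcases le_or_gt a m with ha | ha
    · rcases le_or_gt b m with hbm | hbm
      · have h1 : (m - a).choose b = 0 := Nat.choose_eq_zero_of_lt (by omega)
        have h2 : (m - b).choose a = 0 := Nat.choose_eq_zero_of_lt (by omega)
        rw [h1, h2, mul_zero, mul_zero]
      · have h1 : m.choose b = 0 := Nat.choose_eq_zero_of_lt hbm
        have h2 : (m - a).choose b = 0 := Nat.choose_eq_zero_of_lt (by omega)
        rw [h1, h2, mul_zero, zero_mul]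
    · have h1 : m.choose a = 0 := Nat.choose_eq_zero_of_lt ha
      have h2 : (m - b).choose a = 0 := Nat.choose_eq_zero_of_lt (by omega)
      rw [h1, h2, mul_zero, zero_mul]

lemma choose_term_symm {n ℓ r i : ℕ} (hir : i ≤ r) (hil : i ≤ ℓ) (hr : r ≤ n) (hl : ℓ ≤ n) :
    n.choose r * (r.choose i * (n - r).choose (ℓ - i))
      = n.choose ℓ * (ℓ.choose i * (n - ℓ).choose (r - i)) := by
  have h1 := Nat.choose_mul (n := n) hir
  have h2 := Nat.choose_mul (n := n) hil
  have h3 : n - r = (n - i) - (r - i) := by omega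
  have h4 : n - ℓ = (n - i) - (ℓ - i) := by omega
  have h5 := choose_sub_symm (n - i) (r - i) (ℓ - i)
  calc n.choose r * (r.choose i * (n - r).choose (ℓ - i))
      = (n.choose r * r.choose i) * (n - r).choose (ℓ - i) := by ring
    _ = (n.choose i * (n - i).choose (r - i)) * (n - r).choose (ℓ - i) := by rw [h1]
    _ = n.choose i * ((n - i).choose (r - i) * ((n - i) - (r - i)).choose (ℓ - i)) := by
        rw [← h3]; ring
    _ = n.choose i * ((n - i).choose (ℓ - i) * ((n - i) - (ℓ - i)).choose (r - i)) := by
        rw [h5]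
    _ = (n.choose i * (n - i).choose (ℓ - i)) * (n - ℓ).choose (r - i) := by rw [← h4]; ring
    _ = (n.choose ℓ * ℓ.choose i) * (n - ℓ).choose (r - i) := by rw [h2]
    _ = n.choose ℓ * (ℓ.choose i * (n - ℓ).choose (r - i)) := by ring

lemma kraw_symm (n ℓ r : ℕ) (hr : r ≤ n) (hl : ℓ ≤ n) :
    (n.choose r : ℤ) * binKraw n ℓ r = (n.choose ℓ : ℤ) * binKraw n r ℓ := by
  have h1 : (∑ i ∈ Finset.range (ℓ + 1),
        (n.choose r : ℤ) * ((-1 : ℤ) ^ i * (r.choose i) * ((n - r).choose (ℓ - i))))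
      = ∑ i ∈ Finset.range (min ℓ r + 1),
        (n.choose r : ℤ) * ((-1 : ℤ) ^ i * (r.choose i) * ((n - r).choose (ℓ - i))) := by
    refine (Finset.sum_subset (Finset.range_subset_range.2 (by omega)) fun i hi hni => ?_).symm
    simp only [Finset.mem_range] at hi hni
    have hz : r.choose i = 0 := Nat.choose_eq_zero_of_lt (by omega)
    simp [hz]
  have h2 : (∑ i ∈ Finset.range (r + 1),
        (n.choose ℓ : ℤ) * ((-1 : ℤ) ^ i * (ℓ.choose i) * ((n - ℓ).choose (r - i))))
      = ∑ i ∈ Finset.range (min ℓ r + 1),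
        (n.choose ℓ : ℤ) * ((-1 : ℤ) ^ i * (ℓ.choose i) * ((n - ℓ).choose (r - i))) := by
    refine (Finset.sum_subset (Finset.range_subset_range.2 (by omega)) fun i hi hni => ?_).symm
    simp only [Finset.mem_range] at hi hni
    have hz : ℓ.choose i = 0 := Nat.choose_eq_zero_of_lt (by omega)
    simp [hz]
  unfold binKraw
  rw [Finset.mul_sum, Finset.mul_sum, h1, h2]
  refine Finset.sum_congr rfl fun i hi => ?_
  simp only [Finset.mem_range] at hi
  have hir : i ≤ r := by omega
  have hil : i ≤ ℓ := by omega
  have hN := choose_term_symm hir hil hr hl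
  have hz : ((n.choose r : ℤ)) * ((r.choose i : ℤ) * ((n - r).choose (ℓ - i) : ℤ))
      = (n.choose ℓ : ℤ) * ((ℓ.choose i : ℤ) * ((n - ℓ).choose (r - i) : ℤ)) := by
    exact_mod_cast hN
  linear_combination ((-1 : ℤ) ^ i) * hz

lemma choose_step (t j : ℕ) (ht : 1 ≤ t) :
    (2 * (j : ℤ) + 2) * ((2 * t - 1).choose (j + 1) : ℤ)
      = (4 * (t : ℤ) - 2 - 2 * j) * ((2 * t - 1).choose j : ℤ) := by
  rcases le_or_gt j (2 * t - 1) with h | h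
  · have key := Nat.choose_succ_right_eq (2 * t - 1) j
    have kz : ((2 * t - 1).choose (j + 1) : ℤ) * ((j : ℤ) + 1)
        = ((2 * t - 1).choose j : ℤ) * ((2 * t - 1 - j : ℕ) : ℤ) := by exact_mod_cast key
    have hcast : ((2 * t - 1 - j : ℕ) : ℤ) = 2 * (t : ℤ) - 1 - j := by omega
    rw [hcast] at kz
    linear_combination 2 * kz
  · have hz1 : (2 * t - 1).choose j = 0 := Nat.choose_eq_zero_of_lt h
    have hz2 : (2 * t - 1).choose (j + 1) = 0 := Nat.choose_eq_zero_of_lt (by omega)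
    simp [hz1, hz2]

lemma Bval (t : ℕ) (ht : 1 ≤ t) : ∀ j,
    binKraw (4 * t - 1) (2 * j) (2 * t) = (-1 : ℤ) ^ j * ((2 * t - 1).choose j) ∧
    binKraw (4 * t - 1) (2 * j + 1) (2 * t) = (-1 : ℤ) ^ (j + 1) * ((2 * t - 1).choose j) := by
  intro j
  induction j with
  | zero =>
    constructor
    · simp [binKraw]
    · have : (4 * t - 1 - 2 * t) = 2 * t - 1 := by omega
      simp [binKraw, Finset.sum_range_succ, this]
      omega
  | succ j ih =>
    obtain ⟨h1, h2⟩ := ih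
    have hcn : ((4 * t - 1 : ℕ) : ℤ) = 4 * (t : ℤ) - 1 := by omega
    have hrec1 := kraw_rec (4 * t - 1) (2 * t) (2 * j + 1) (by omega) (by omega) (by omega)
    have hrec2 := kraw_rec (4 * t - 1) (2 * t) (2 * j + 2) (by omega) (by omega) (by omega)
    simp only [Nat.add_sub_cancel, hcn] at hrec1 hrec2
    rw [show 2 * j + 1 + 1 = 2 * j + 2 by omega] at hrec1
    push_cast at hrec1 hrec2
    rw [h1, h2] at hrec1
    have hstep := choose_step t j ht
    have heven : binKraw (4 * t - 1) (2 * j + 2) (2 * t)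
        = (-1 : ℤ) ^ (j + 1) * ((2 * t - 1).choose (j + 1)) := by
      have hne : (2 * (j : ℤ) + 2) ≠ 0 := by positivity
      apply mul_left_cancel₀ hne
      simp only [pow_succ] at *
      linear_combination hrec1 + (-1 : ℤ) ^ j * hstep
    have hodd : binKraw (4 * t - 1) (2 * j + 2 + 1) (2 * t)
        = (-1 : ℤ) ^ (j + 1 + 1) * ((2 * t - 1).choose (j + 1)) := by
      have hne : (2 * (j : ℤ) + 3) ≠ 0 := by positivity
      rw [heven, h2] at hrec2
      apply mul_left_cancel₀ hne
      simp only [pow_succ] at *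
      linear_combination hrec2 - (-1 : ℤ) ^ j * hstep
    constructor
    · rw [show 2 * (j + 1) = 2 * j + 2 by ring]; exact heven
    · rw [show 2 * (j + 1) + 1 = 2 * j + 2 + 1 by ring]; exact hodd

/-- Eigenvalues of the Hamming graph `H_{4t-1,2t}`: explicit formulas for
`K_{2t}^{4t-1}(2j)` and `K_{2t}^{4t-1}(2j+1)` for `0 ≤ j ≤ 2t-1`. -/
theorem binKraw_4t_sub_one (t j : ℕ) (ht : 1 ≤ t) (hj : j ≤ 2 * t - 1) :
    ((binKraw (4 * t - 1) (2 * t) (2 * j) : ℤ) : ℚ)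
        = (-1 : ℚ) ^ j * ((4 * t - 1).choose (2 * t)) * ((2 * t - 1).choose j)
            / ((4 * t - 1).choose (2 * j)) ∧
    ((binKraw (4 * t - 1) (2 * t) (2 * j + 1) : ℤ) : ℚ)
        = (-1 : ℚ) ^ (j + 1) * ((4 * t - 1).choose (2 * t)) * ((2 * t - 1).choose j)
            / ((4 * t - 1).choose (2 * j + 1)) := by
  obtain ⟨hB1, hB2⟩ := Bval t ht j
  have h2j : 2 * j ≤ 4 * t - 1 := by omega
  have h2j1 : 2 * j + 1 ≤ 4 * t - 1 := by omega
  have h2t : 2 * t ≤ 4 * t - 1 := by omega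
  constructor
  · have hsym := kraw_symm (4 * t - 1) (2 * t) (2 * j) h2j h2t
    rw [hB1] at hsym
    have hne : (((4 * t - 1).choose (2 * j) : ℚ)) ≠ 0 :=
      Nat.cast_ne_zero.2 (Nat.choose_pos h2j).ne'
    rw [eq_div_iff hne]
    have := congrArg (fun z : ℤ => (z : ℚ)) hsym
    push_cast at this
    linear_combination this
  · have hsym := kraw_symm (4 * t - 1) (2 * t) (2 * j + 1) h2j1 h2t
    rw [hB2] at hsym
    have hne : (((4 * t - 1).choose (2 * j + 1) : ℚ)) ≠ 0 :=
      Nat.cast_ne_zero.2 (Nat.choose_pos h2j1).ne'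
    rw [eq_div_iff hne]
    have := congrArg (fun z : ℤ => (z : ℚ)) hsym
    push_cast at this
    linear_combination this
end

section
/- For t ≥ 1 and 0 ≤ j ≤ ⌊t/2⌋ (with 4j+2 ≤ 4t-1), the absolute values of consecutive odd/even Krawtchouk values coincide: |K_{2t}^{4t-1}(4j+2)| = |K_{2t}^{4t-1}(4j+1)|. -/
lemma binKraw_sub_eq (m ℓ r : ℕ) :
    binKraw (r + 1 + m) (ℓ + 1) (r + 1)
      = binKraw (r + m) (ℓ + 1) r - binKraw (r + m) ℓ r := by
  have hm1 : r + 1 + m - (r + 1) = m := by omega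
  have hm2 : r + m - r = m := by omega
  unfold binKraw
  rw [hm1, hm2]
  rw [Finset.sum_range_succ' (fun i => (-1 : ℤ) ^ i * ((r+1).choose i) * (m.choose (ℓ + 1 - i)))]
  rw [Finset.sum_range_succ' (fun i => (-1 : ℤ) ^ i * (r.choose i) * (m.choose (ℓ + 1 - i)))]
  have key : ∀ k ∈ Finset.range (ℓ + 1),
      (-1 : ℤ) ^ (k+1) * ((r+1).choose (k+1)) * (m.choose (ℓ + 1 - (k+1)))
      = -((-1 : ℤ) ^ k * (r.choose k) * (m.choose (ℓ - k)))
        + (-1 : ℤ) ^ (k+1) * (r.choose (k+1)) * (m.choose (ℓ + 1 - (k+1))) := by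
    intro k hk
    have h1 : ℓ + 1 - (k + 1) = ℓ - k := by omega
    rw [Nat.choose_succ_succ, h1]
    push_cast
    ring
  rw [Finset.sum_congr rfl key, Finset.sum_add_distrib, Finset.sum_neg_distrib]
  simp only [Nat.choose_zero_right]
  ring
lemma binKraw_add_eq (m ℓ r : ℕ) :
    binKraw (r + 1 + m) (ℓ + 1) r
      = binKraw (r + m) (ℓ + 1) r + binKraw (r + m) ℓ r := by
  have hm1 : r + 1 + m - r = m + 1 := by omega
  have hm2 : r + m - r = m := by omega
  unfold binKraw
  rw [hm1, hm2]
  rw [Finset.sum_range_succ (fun i => (-1 : ℤ) ^ i * (r.choose i) * ((m+1).choose (ℓ + 1 - i)))]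
  rw [Finset.sum_range_succ (fun i => (-1 : ℤ) ^ i * (r.choose i) * (m.choose (ℓ + 1 - i)))]
  have key : ∀ i ∈ Finset.range (ℓ + 1),
      (-1 : ℤ) ^ i * (r.choose i) * ((m+1).choose (ℓ + 1 - i))
      = (-1 : ℤ) ^ i * (r.choose i) * (m.choose (ℓ + 1 - i))
        + (-1 : ℤ) ^ i * (r.choose i) * (m.choose (ℓ - i)) := by
    intro i hi
    have h1 : i ≤ ℓ := by simpa using Nat.lt_succ_iff.mp (Finset.mem_range.mp hi)
    have h2 : ℓ + 1 - i = (ℓ - i) + 1 := by omega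
    rw [h2, Nat.choose_succ_succ]
    push_cast
    ring
  rw [Finset.sum_congr rfl key, Finset.sum_add_distrib]
  simp only [Nat.sub_self, Nat.choose_zero_right]
  ring

lemma binKraw_mid_eq_zero (ℓ r : ℕ) (hr : Odd r) (hrl : r ≤ 2 * ℓ) :
    binKraw (2 * ℓ) ℓ r = 0 := by
  unfold binKraw
  apply Finset.sum_involution (fun a _ => if r ≤ ℓ + a ∧ a ≤ r then r - a else a)
  · intro a ha
    have haℓ : a ≤ ℓ := by simpa using Nat.lt_succ_iff.mp (Finset.mem_range.mp ha)
    by_cases hc : r ≤ ℓ + a ∧ a ≤ r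
    · rw [if_pos hc]
      have hsym1 : r.choose (r - a) = r.choose a := Nat.choose_symm hc.2
      have hsym2 : (2 * ℓ - r).choose (ℓ - (r - a)) = (2 * ℓ - r).choose (ℓ - a) := by
        have h1 : ℓ - (r - a) = (2 * ℓ - r) - (ℓ - a) := by omega
        have h2 : ℓ - a ≤ 2 * ℓ - r := by omega
        rw [h1, Nat.choose_symm h2]
      have hro : r % 2 = 1 := Nat.odd_iff.mp hr
      have hsgn : (-1 : ℤ) ^ (r - a) = -(-1 : ℤ) ^ a := by
        rcases Nat.even_or_odd a with he | ho
        · have h1 : Odd (r - a) := Nat.odd_iff.mpr (by have := Nat.even_iff.mp he; omega)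
          rw [h1.neg_one_pow, he.neg_one_pow]
        · have h1 : Even (r - a) := Nat.even_iff.mpr (by have := Nat.odd_iff.mp ho; omega)
          rw [h1.neg_one_pow, ho.neg_one_pow]; norm_num
      rw [hsym1, hsym2, hsgn]
      ring
    · rw [if_neg hc]
      have hz : (-1 : ℤ) ^ a * (r.choose a) * ((2 * ℓ - r).choose (ℓ - a)) = 0 := by
        rcases not_and_or.mp hc with h | h
        · have : 2 * ℓ - r < ℓ - a := by omega
          rw [Nat.choose_eq_zero_of_lt this]; ring
        · have : r < a := by omega
          rw [Nat.choose_eq_zero_of_lt this]; ring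
      rw [hz]; ring
  · intro a ha hne
    have haℓ : a ≤ ℓ := by simpa using Nat.lt_succ_iff.mp (Finset.mem_range.mp ha)
    have hro : r % 2 = 1 := Nat.odd_iff.mp hr
    by_cases hc : r ≤ ℓ + a ∧ a ≤ r
    · rw [if_pos hc]
      intro h; omega
    · exfalso; apply hne
      rcases not_and_or.mp hc with h | h
      · have : 2 * ℓ - r < ℓ - a := by omega
        rw [Nat.choose_eq_zero_of_lt this]; ring
      · have : r < a := by omega
        rw [Nat.choose_eq_zero_of_lt this]; ring
  · intro a ha
    have haℓ : a ≤ ℓ := by simpa using Nat.lt_succ_iff.mp (Finset.mem_range.mp ha)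
    by_cases hc : r ≤ ℓ + a ∧ a ≤ r
    · rw [if_pos hc]; simp only [Finset.mem_range]; omega
    · rw [if_neg hc]; exact ha
  · intro a ha
    have haℓ : a ≤ ℓ := by simpa using Nat.lt_succ_iff.mp (Finset.mem_range.mp ha)
    by_cases hc : r ≤ ℓ + a ∧ a ≤ r
    · simp only [if_pos hc]
      have hc2 : r ≤ ℓ + (r - a) ∧ r - a ≤ r := by omega
      simp only [if_pos hc2]
      omega
    · simp only [if_neg hc]

/-- `|K_{2t}^{4t-1}(4j+2)| = |K_{2t}^{4t-1}(4j+1)|` for `0 ≤ j ≤ ⌊t/2⌋`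
with `4j+2 ≤ 4t-1`. -/
theorem binKraw_abs_eq (t j : ℕ) (ht : 1 ≤ t) (hj : j ≤ t / 2)
    (hj2 : 4 * j + 2 ≤ 4 * t - 1) :
    |binKraw (4 * t - 1) (2 * t) (4 * j + 2)| = |binKraw (4 * t - 1) (2 * t) (4 * j + 1)| := by
  obtain ⟨s, rfl⟩ : ∃ s, t = s + 1 := ⟨t - 1, by omega⟩
  have hjs : j ≤ s := by omega
  have ha : 4 * (s + 1) - 1 = (4 * j + 1) + 1 + (4 * (s - j) + 1) := by omega
  have hb : 2 * (s + 1) = (2 * s + 1) + 1 := by omega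
  have hc : (4 * j + 1) + (4 * (s - j) + 1) = 2 * (2 * s + 1) := by omega
  have hmid : binKraw (2 * (2 * s + 1)) (2 * s + 1) (4 * j + 1) = 0 :=
    binKraw_mid_eq_zero _ _ ⟨2 * j, by ring⟩ (by omega)
  rw [ha, hb, show 4 * j + 2 = (4 * j + 1) + 1 from rfl,
    binKraw_sub_eq, binKraw_add_eq, hc, hmid]
  simp
end

section
/- Let 4 | n, x, y ∈ F_2^n with Hamming distance d(x,y) = n/2, and for 0 ≤ α ≤ n-1 define P_x^α(i,j) = (1/n) ξ^{(j-i)α} (-1)^{x_i+x_j} with ξ = e^{2πi/n}. Then P_x^α P_y^α = 0 for every α. Key step: Σ_{k=0}^{n-1} (-1)^{x_k+y_k} = 0 when d(x,y) = n/2. -/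
open Complex

/-- Hamming distance between binary vectors. -/
def hdist {n : ℕ} (x y : Fin n → ZMod 2) : ℕ :=
  (Finset.univ.filter (fun i => x i ≠ y i)).card

/-- The projection matrices `P_x^α(i,j) = (1/n) ξ^{(j-i)α} (-1)^{x_i+x_j}`,
where `ξ = e^{2πi/n}`. -/
noncomputable def projMat (n : ℕ) (x : Fin n → ZMod 2) (α : ℕ) :
    Matrix (Fin n) (Fin n) ℂ :=
  Matrix.of fun i j =>
    (1 / n : ℂ) * Complex.exp (2 * Real.pi * Complex.I / n) ^ (((j : ℤ) - (i : ℤ)) * α)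
      * (-1 : ℂ) ^ ((x i).val + (x j).val)

lemma sign_eq (a b : ZMod 2) : (-1 : ℤ) ^ (a.val + b.val) = if a = b then 1 else -1 := by
  revert a b; decide

/-- If `4 | n` and `d(x,y) = n/2` then `∑_k (-1)^{x_k+y_k} = 0` and
`P_x^α P_y^α = 0` for every `α`: the projections give a quantum `n`-coloring
of the Hadamard graph `H_n`. -/
theorem projMat_orthogonal_of_hadamard_adjacent (n : ℕ) (hn4 : 4 ∣ n) (hn : 0 < n)
    (x y : Fin n → ZMod 2) (hxy : hdist x y = n / 2) :
    (∑ k : Fin n, (-1 : ℤ) ^ ((x k).val + (y k).val) = 0) ∧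
    (∀ α : ℕ, α ≤ n - 1 → projMat n x α * projMat n y α = 0) := by
  have hcards : (Finset.univ.filter (fun i => x i ≠ y i)).card
      + (Finset.univ.filter (fun i => ¬ x i ≠ y i)).card = n := by
    rw [Finset.card_filter_add_card_filter_not (p := fun i => x i ≠ y i)]
    simp
  have hsum : ∑ k : Fin n, (-1 : ℤ) ^ ((x k).val + (y k).val) = 0 := by
    have : ∑ k : Fin n, (-1 : ℤ) ^ ((x k).val + (y k).val)
        = ∑ k : Fin n, (if x k = y k then (1 : ℤ) else -1) := by
      exact Finset.sum_congr rfl fun k _ => sign_eq _ _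
    rw [this, Finset.sum_ite, Finset.sum_const, Finset.sum_const]
    have hne : (Finset.univ.filter (fun i => x i ≠ y i)).card = n / 2 := hxy
    have heq : (Finset.univ.filter (fun i => ¬ x i ≠ y i)).card = n / 2 := by omega
    have hfilter : (Finset.univ.filter (fun i => x i = y i))
        = (Finset.univ.filter (fun i => ¬ x i ≠ y i)) := by
      apply Finset.filter_congr; intro i _; tauto
    have hfilter2 : (Finset.univ.filter (fun i => ¬ x i = y i))
        = (Finset.univ.filter (fun i => x i ≠ y i)) := rfl
    rw [hfilter, hfilter2, heq, hne]
    simp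
  refine ⟨hsum, fun α _ => ?_⟩
  have hc : Complex.exp (2 * Real.pi * Complex.I / n) ≠ 0 := Complex.exp_ne_zero _
  have h0 : ∑ k : Fin n, ((-1 : ℂ) ^ ((x k).val + (y k).val)) = 0 := by
    have := congrArg (fun z : ℤ => (z : ℂ)) hsum
    push_cast at this
    simpa using this
  ext i j
  rw [Matrix.mul_apply]
  have hterm : ∀ k : Fin n, projMat n x α i k * projMat n y α k j
      = ((1 / n : ℂ) * (1 / n) * (-1) ^ ((x i).val) * (-1) ^ ((y j).val)
          * Complex.exp (2 * Real.pi * Complex.I / n) ^ (((j : ℤ) - (i : ℤ)) * α))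
        * ((-1 : ℂ) ^ ((x k).val + (y k).val)) := by
    intro k
    simp only [projMat, Matrix.of_apply]
    rw [show ((j : ℤ) - (i : ℤ)) * α
        = ((k : ℤ) - (i : ℤ)) * α + ((j : ℤ) - (k : ℤ)) * α by ring,
      zpow_add₀ hc]
    ring
  calc ∑ k : Fin n, projMat n x α i k * projMat n y α k j
      = ∑ k : Fin n, ((1 / n : ℂ) * (1 / n) * (-1) ^ ((x i).val) * (-1) ^ ((y j).val)
          * Complex.exp (2 * Real.pi * Complex.I / n) ^ (((j : ℤ) - (i : ℤ)) * α))
        * ((-1 : ℂ) ^ ((x k).val + (y k).val)) :=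
        Finset.sum_congr rfl fun k _ => hterm k
    _ = 0 := by rw [← Finset.mul_sum, h0, mul_zero]
end
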